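/- arXiv:1906.09801 — 2 statements merged into one kernel-verified Lean document; each statement's English description precedes it below -/
import Mathlib

section
/- Let U ⊆ ℂ^k be an open set on which P_s has k pairwise distinct roots, and let Ψ : U → ℂ^k be a holomorphic solution of the system (@@). Then s ↦ A(s)Ψ(s) is also a solution of (@@) on U. -/
open Matrix Complex

noncomputable section

/-- The universal monic polynomial `P_s(z) = Σ_{h=0}^{k} (−1)^h s_h z^{k−h}` (with `s_0 = 1`),
where `s i` represents the `(i+1)`-st coefficient `s_{i+1}`. -/
def LP (k : ℕ) (s : Fin k → ℂ) (z : ℂ) : ℂ :=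
  z ^ k + ∑ i : Fin k, (-1 : ℂ) ^ ((i : ℕ) + 1) * s i * z ^ (k - 1 - (i : ℕ))

/-- The companion matrix `A(s)` of `P_s`. -/
def LcompA (k : ℕ) (s : Fin k → ℂ) : Matrix (Fin k) (Fin k) ℂ := fun i j =>
  if (i : ℕ) = k - 1 then
    (-1 : ℂ) ^ (k - 1 - (j : ℕ)) * s ⟨k - 1 - (j : ℕ), by have := j.isLt; omega⟩
  else if (j : ℕ) = (i : ℕ) + 1 then 1 else 0

/-- `P'_s(A(s)) = Σ_{h=0}^{k−1} (−1)^h (k−h) s_h A(s)^{k−h−1}` (with `s_0 = 1`). -/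
def LPprimeA (k : ℕ) (s : Fin k → ℂ) : Matrix (Fin k) (Fin k) ℂ :=
  (k : ℂ) • LcompA k s ^ (k - 1) + ∑ i : Fin k,
    ((-1 : ℂ) ^ ((i : ℕ) + 1) * ((k - 1 - (i : ℕ) : ℕ) : ℂ) * s i) •
      LcompA k s ^ (k - 2 - (i : ℕ))

namespace CPS

/-- Directional derivative of `t ↦ LcompA k t`. -/
def dA (k : ℕ) (v : Fin k → ℂ) : Matrix (Fin k) (Fin k) ℂ := fun i j =>
  if (i : ℕ) = k - 1 then
    (-1 : ℂ) ^ (k - 1 - (j : ℕ)) * v ⟨k - 1 - (j : ℕ), by have := j.isLt; omega⟩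
  else 0

def entryD (k : ℕ) (i j : Fin k) : (Fin k → ℂ) →L[ℂ] ℂ :=
  if (i : ℕ) = k - 1 then
    ((-1 : ℂ) ^ (k - 1 - (j : ℕ))) •
      ContinuousLinearMap.proj (R := ℂ) (φ := fun _ : Fin k => ℂ)
        ⟨k - 1 - (j : ℕ), by have := j.isLt; omega⟩
  else 0

lemma entryD_apply {k : ℕ} (i j : Fin k) (v : Fin k → ℂ) :
    entryD k i j v = dA k v i j := by
  unfold entryD dA
  split <;> simp

lemma hasFDerivAt_entry {k : ℕ} (i j : Fin k) (s : Fin k → ℂ) :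
    HasFDerivAt (fun t => LcompA k t i j) (entryD k i j) s := by
  unfold LcompA entryD
  by_cases hi : (i : ℕ) = k - 1
  · simp only [hi, if_true]
    exact (ContinuousLinearMap.proj (R := ℂ) (φ := fun _ : Fin k => ℂ)
      ⟨k - 1 - (j : ℕ), by have := j.isLt; omega⟩).hasFDerivAt.const_mul _
  · simp only [hi, if_false]
    exact hasFDerivAt_const _ _

lemma hasFDerivAt_mulVecA {k : ℕ} {w : (Fin k → ℂ) → Fin k → ℂ}
    {w' : (Fin k → ℂ) →L[ℂ] (Fin k → ℂ)} {s : Fin k → ℂ} (hw : HasFDerivAt w w' s) :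
    HasFDerivAt (fun t => LcompA k t *ᵥ w t)
      (ContinuousLinearMap.pi fun i => ∑ j : Fin k,
        (LcompA k s i j •
            ((ContinuousLinearMap.proj (R := ℂ) (φ := fun _ : Fin k => ℂ) j).comp w')
          + w s j • entryD k i j)) s := by
  apply hasFDerivAt_pi''
  intro i
  rw [ContinuousLinearMap.proj_pi]
  have hfun : (fun t => (fun u => LcompA k u *ᵥ w u) t i)
      = fun t => ∑ j : Fin k, LcompA k t i j * w t j := by
    funext t; simp [Matrix.mulVec, dotProduct]
  rw [hfun]
  exact HasFDerivAt.fun_sum fun j _ =>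
    (hasFDerivAt_entry i j s).mul
      ((ContinuousLinearMap.proj (R := ℂ) (φ := fun _ : Fin k => ℂ) j).hasFDerivAt.comp s hw)

lemma diff_mulVecA {k : ℕ} {w : (Fin k → ℂ) → Fin k → ℂ} {s : Fin k → ℂ}
    (hw : DifferentiableAt ℂ w s) :
    DifferentiableAt ℂ (fun t => LcompA k t *ᵥ w t) s :=
  (hasFDerivAt_mulVecA hw.hasFDerivAt).differentiableAt

lemma fderiv_mulVecA {k : ℕ} {w : (Fin k → ℂ) → Fin k → ℂ} {s : Fin k → ℂ}
    (hw : DifferentiableAt ℂ w s) (v : Fin k → ℂ) :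
    fderiv ℂ (fun t => LcompA k t *ᵥ w t) s v
      = dA k v *ᵥ w s + LcompA k s *ᵥ (fderiv ℂ w s v) := by
  rw [(hasFDerivAt_mulVecA hw.hasFDerivAt).fderiv]
  funext i
  simp only [ContinuousLinearMap.pi_apply, ContinuousLinearMap.sum_apply,
    ContinuousLinearMap.add_apply, ContinuousLinearMap.smul_apply,
    ContinuousLinearMap.coe_comp', Function.comp_apply, ContinuousLinearMap.proj_apply,
    entryD_apply, smul_eq_mul, Pi.add_apply, Matrix.mulVec, dotProduct]
  rw [Finset.sum_add_distrib, add_comm]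
  congr 1 <;> exact Finset.sum_congr rfl fun j _ => by ring

lemma diff_pow_mulVecA {k : ℕ} (m : ℕ) {w : (Fin k → ℂ) → Fin k → ℂ} {s : Fin k → ℂ}
    (hw : DifferentiableAt ℂ w s) :
    DifferentiableAt ℂ (fun t => (LcompA k t ^ m) *ᵥ w t) s := by
  induction m with
  | zero => simpa [Matrix.one_mulVec] using hw
  | succ n ih =>
    have h2 := diff_mulVecA ih
    have hfun : (fun t => (LcompA k t ^ (n + 1)) *ᵥ w t)
        = fun t => LcompA k t *ᵥ ((LcompA k t ^ n) *ᵥ w t) := by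
      funext t
      rw [Matrix.mulVec_mulVec, ← pow_succ']
    rw [hfun]
    exact h2

lemma row_zero_pow {k : ℕ} (hk : 1 ≤ k) (s : Fin k → ℂ) :
    ∀ m, m ≤ k - 1 → ∀ j : Fin k,
      (LcompA k s ^ m) ⟨0, by omega⟩ j = if (j : ℕ) = m then 1 else 0 := by
  intro m
  induction m with
  | zero =>
    intro _ j
    rw [pow_zero, Matrix.one_apply]
    have hiff : ((⟨0, by omega⟩ : Fin k) = j) ↔ ((j : ℕ) = 0) := by
      rw [Fin.ext_iff]; exact eq_comm
    simp [hiff]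
  | succ n ih =>
    intro hn j
    have hn' : n ≤ k - 1 := by omega
    rw [pow_succ, Matrix.mul_apply]
    rw [Finset.sum_eq_single (⟨n, by omega⟩ : Fin k)]
    · have hv : ((⟨n, by omega⟩ : Fin k) : ℕ) = n := rfl
      rw [ih hn' _, hv, if_pos rfl, one_mul]
      show LcompA k s ⟨n, by omega⟩ j = _
      unfold LcompA
      rw [if_neg (show ¬(n = k - 1) by omega)]
    · intro b _ hb
      rw [ih hn' b, if_neg (fun hh => hb (Fin.ext hh)), zero_mul]
    · simp


lemma commute_A_Pprime (k : ℕ) (s : Fin k → ℂ) : Commute (LcompA k s) (LPprimeA k s) := by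
  unfold LPprimeA
  exact Commute.add_right (((Commute.refl (LcompA k s)).pow_right _).smul_right _)
    (Commute.sum_right _ _ _ fun i _ => (((Commute.refl (LcompA k s)).pow_right _).smul_right _))

lemma commute_nonsing_inv {n : ℕ} {A B : Matrix (Fin n) (Fin n) ℂ} (h : Commute A B) :
    Commute A B⁻¹ := by
  by_cases hB : IsUnit B.det
  · show A * B⁻¹ = B⁻¹ * A
    calc A * B⁻¹ = B⁻¹ * B * (A * B⁻¹) := by rw [Matrix.nonsing_inv_mul B hB, one_mul]
      _ = B⁻¹ * (A * B * B⁻¹) := by rw [mul_assoc, ← mul_assoc B A B⁻¹, ← h.eq]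
      _ = B⁻¹ * A * (B * B⁻¹) := by rw [mul_assoc A B B⁻¹, ← mul_assoc]
      _ = B⁻¹ * A := by rw [Matrix.mul_nonsing_inv B hB, mul_one]
  · rw [Matrix.nonsing_inv_apply_not_isUnit B hB]
    exact Commute.zero_right A

lemma dA_mulVec_ne {k : ℕ} {i : Fin k} (hi : ¬((i : ℕ) = k - 1)) (v y : Fin k → ℂ) :
    (dA k v *ᵥ y) i = 0 := by
  show ∑ j : Fin k, dA k v i j * y j = 0
  refine Finset.sum_eq_zero fun j _ => ?_
  unfold dA
  rw [if_neg hi, zero_mul]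

lemma dA_single_mulVec {k m r : ℕ} (hk : 1 ≤ k) (hm : m ≤ k - 1) (hr : k - 1 - m = r)
    (y : Fin k → ℂ) (i : Fin k) (hi : (i : ℕ) = k - 1) :
    (dA k (Pi.single (⟨m, by omega⟩ : Fin k) 1) *ᵥ y) i
      = (-1 : ℂ) ^ m * y ⟨r, by omega⟩ := by
  show ∑ j : Fin k, dA k (Pi.single (⟨m, by omega⟩ : Fin k) 1) i j * y j = _
  rw [Finset.sum_eq_single (⟨r, by omega⟩ : Fin k)]
  · unfold dA
    rw [if_pos hi, Pi.single_apply]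
    have hval : k - 1 - (((⟨r, by omega⟩ : Fin k)) : ℕ) = m := by
      show k - 1 - r = m; omega
    rw [if_pos (Fin.ext (show k - 1 - (((⟨r, by omega⟩ : Fin k)) : ℕ) = m from hval))]
    rw [mul_one]
    congr 1
    · rw [hval]
  · intro b _ hb
    unfold dA
    rw [if_pos hi, Pi.single_apply, if_neg, mul_zero, zero_mul]
    intro hc
    have hc' : k - 1 - (b : ℕ) = m := congrArg Fin.val hc
    have := b.isLt
    exact hb (Fin.ext (by show (b : ℕ) = r; omega))
  · simp

lemma pow_mulVec_zero {k m : ℕ} (hk : 1 ≤ k) (hm : m ≤ k - 1) (s : Fin k → ℂ) (x : Fin k → ℂ) :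
    ((LcompA k s ^ m) *ᵥ x) ⟨0, by omega⟩ = x ⟨m, by omega⟩ := by
  show ∑ j : Fin k, (LcompA k s ^ m) ⟨0, by omega⟩ j * x j = _
  rw [Finset.sum_eq_single (⟨m, by omega⟩ : Fin k)]
  · rw [row_zero_pow hk s m hm, if_pos rfl, one_mul]
  · intro b _ hb
    rw [row_zero_pow hk s m hm, if_neg (fun hc => hb (Fin.ext hc)), zero_mul]
  · simp

lemma key_sign {k h : ℕ} (hk : 2 ≤ k) (h1 : 1 ≤ h) (h2 : h ≤ k - 1)
    (s : Fin k → ℂ) (x : Fin k → ℂ) :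
    ((-1 : ℂ) ^ (k + h)) • (dA k (Pi.single (⟨h - 1, by omega⟩ : Fin k) 1) *ᵥ x)
      = dA k (Pi.single (⟨k - 1, by omega⟩ : Fin k) 1) *ᵥ ((LcompA k s ^ (k - h)) *ᵥ x) := by
  funext i
  rw [Pi.smul_apply]
  by_cases hi : (i : ℕ) = k - 1
  · rw [dA_single_mulVec (by omega) (by omega) (show k - 1 - (h - 1) = k - h by omega) x i hi,
      dA_single_mulVec (by omega) (le_refl (k - 1)) (show k - 1 - (k - 1) = 0 by omega)
        ((LcompA k s ^ (k - h)) *ᵥ x) i hi,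
      pow_mulVec_zero (by omega) (by omega) s x]
    rw [smul_eq_mul, ← mul_assoc, ← pow_add,
      show k + h + (h - 1) = 2 * h + (k - 1) by omega, pow_add, pow_mul, neg_one_sq, one_pow,
      one_mul]
  · rw [dA_mulVec_ne hi, dA_mulVec_ne hi, smul_zero]

end CPS

/-- The system (@) at a point `s`: `(−1)^{k+h} ∂Φ/∂s_h = ∂(A(s)^{k−h} Φ)/∂s_k`
for every `h ∈ {1, …, k−1}`. -/

def SatA (k : ℕ) (Φ : (Fin k → ℂ) → Fin k → ℂ) (s : Fin k → ℂ) : Prop :=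
  ∀ h : ℕ, ∀ _h1 : 1 ≤ h, ∀ _h2 : h ≤ k - 1,
    ((-1 : ℂ) ^ (k + h)) •
        fderiv ℂ Φ s (Pi.single (⟨h - 1, by omega⟩ : Fin k) (1 : ℂ))
      = fderiv ℂ (fun t => (LcompA k t ^ (k - h)) *ᵥ Φ t) s
          (Pi.single (⟨k - 1, by omega⟩ : Fin k) (1 : ℂ))

/-- The system (@@) at a point `s`:
`(−1)^{k+h} ∂Ψ/∂s_h = ∂(A(s)^{k−h} Ψ)/∂s_k + (−1)^k (k−h) A(s)^{k−h−1} P'_s(A(s))⁻¹ Ψ`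
for every `h ∈ {1, …, k−1}`. -/
def SatAA (k : ℕ) (Ψ : (Fin k → ℂ) → Fin k → ℂ) (s : Fin k → ℂ) : Prop :=
  ∀ h : ℕ, ∀ _h1 : 1 ≤ h, ∀ _h2 : h ≤ k - 1,
    ((-1 : ℂ) ^ (k + h)) •
        fderiv ℂ Ψ s (Pi.single (⟨h - 1, by omega⟩ : Fin k) (1 : ℂ))
      = fderiv ℂ (fun t => (LcompA k t ^ (k - h)) *ᵥ Ψ t) s
          (Pi.single (⟨k - 1, by omega⟩ : Fin k) (1 : ℂ))
        + ((-1 : ℂ) ^ k * ((k - h : ℕ) : ℂ)) •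
            ((LcompA k s ^ (k - h - 1)) *ᵥ ((LPprimeA k s)⁻¹ *ᵥ Ψ s))

/-- on an open set `U` where `P_s` has `k` pairwise distinct roots, if `Ψ` is a
holomorphic solution of (@@) on `U` then `s ↦ A(s) Ψ(s)` is also a solution of (@@) on `U`. -/
theorem companion_preserves_singular_solutions
    (k : ℕ) (hk : 2 ≤ k) (U : Set (Fin k → ℂ)) (hU : IsOpen U)
    (hdist : ∀ s ∈ U, ∃ z : Fin k → ℂ, Function.Injective z ∧ ∀ j : Fin k, LP k s (z j) = 0)
    (Ψ : (Fin k → ℂ) → Fin k → ℂ) (hΨdiff : DifferentiableOn ℂ Ψ U)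
    (hΨsol : ∀ s ∈ U, SatAA k Ψ s) :
    ∀ s ∈ U, SatAA k (fun t => LcompA k t *ᵥ Ψ t) s := by
  intro s hs h h1 h2
  have hΨd : DifferentiableAt ℂ Ψ s := hΨdiff.differentiableAt (hU.mem_nhds hs)
  have hsol := hΨsol s hs h h1 h2
  have hGd : DifferentiableAt ℂ (fun t => (LcompA k t ^ (k - h)) *ᵥ Ψ t) s :=
    CPS.diff_pow_mulVecA (k - h) hΨd
  show ((-1 : ℂ) ^ (k + h)) •
        fderiv ℂ (fun t => LcompA k t *ᵥ Ψ t) s (Pi.single (⟨h - 1, by omega⟩ : Fin k) 1)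
      = fderiv ℂ (fun t => (LcompA k t ^ (k - h)) *ᵥ (LcompA k t *ᵥ Ψ t)) s
          (Pi.single (⟨k - 1, by omega⟩ : Fin k) 1)
        + ((-1 : ℂ) ^ k * ((k - h : ℕ) : ℂ)) •
            ((LcompA k s ^ (k - h - 1)) *ᵥ ((LPprimeA k s)⁻¹ *ᵥ (LcompA k s *ᵥ Ψ s)))
  have e2 : (fun t => (LcompA k t ^ (k - h)) *ᵥ (LcompA k t *ᵥ Ψ t))
      = fun t => LcompA k t *ᵥ ((LcompA k t ^ (k - h)) *ᵥ Ψ t) := by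
    funext t
    rw [Matrix.mulVec_mulVec, Matrix.mulVec_mulVec, ← pow_succ, ← pow_succ']
  rw [e2, CPS.fderiv_mulVecA hΨd, CPS.fderiv_mulVecA hGd]
  have hGval := eq_sub_of_add_eq hsol.symm
  rw [hGval, Matrix.mulVec_sub, Matrix.mulVec_smul, Matrix.mulVec_smul]
  have hc : Commute (LcompA k s) ((LPprimeA k s)⁻¹) :=
    CPS.commute_nonsing_inv (CPS.commute_A_Pprime k s)
  have hAC : Commute (LcompA k s ^ (k - h - 1) * (LPprimeA k s)⁻¹) (LcompA k s) :=
    Commute.mul_left ((Commute.refl (LcompA k s)).pow_left _) hc.symm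
  have I1 : LcompA k s *ᵥ ((LcompA k s ^ (k - h - 1)) *ᵥ ((LPprimeA k s)⁻¹ *ᵥ Ψ s))
      = (LcompA k s ^ (k - h - 1)) *ᵥ ((LPprimeA k s)⁻¹ *ᵥ (LcompA k s *ᵥ Ψ s)) := by
    simp only [Matrix.mulVec_mulVec]
    rw [← mul_assoc (LcompA k s ^ (k - h - 1)), hAC.eq]
  rw [I1, smul_add, CPS.key_sign hk h1 h2 s (Ψ s)]
  abel
end
end

section
/- Let U ⊆ ℂ^k be an open set on which P_s has k pairwise distinct roots, and let Φ : U → ℂ^k be a holomorphic solution of the system (@). Then Ψ(s) := P'_s(A(s))·Φ(s) is a solution of the system (@@) on U. -/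
open Matrix Complex

noncomputable section

namespace St16

/-! ### Commutator symmetry -/

theorem pow_mul_sandwich {R : Type*} [Ring R] (B E : R) (m n : ℕ) :
    B ^ m * (∑ i ∈ Finset.range n, B ^ i * E * B ^ (n - 1 - i))
      = ∑ i ∈ Finset.range n, B ^ (m + i) * E * B ^ (m + n - 1 - (m + i)) := by
  rw [Finset.mul_sum]
  refine Finset.sum_congr rfl fun i hi => ?_
  have hi' := Finset.mem_range.mp hi
  rw [← mul_assoc, ← mul_assoc, ← pow_add]
  congr 2
  omega

theorem sandwich_mul_pow {R : Type*} [Ring R] (B E : R) (m n : ℕ) :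
    (∑ i ∈ Finset.range n, B ^ i * E * B ^ (n - 1 - i)) * B ^ m
      = ∑ i ∈ Finset.range n, B ^ i * E * B ^ (m + n - 1 - i) := by
  rw [Finset.sum_mul]
  refine Finset.sum_congr rfl fun i hi => ?_
  have hi' := Finset.mem_range.mp hi
  rw [mul_assoc, mul_assoc, ← pow_add]
  have : n - 1 - i + m = m + n - 1 - i := by omega
  rw [this, mul_assoc]

theorem comm_sandwich {R : Type*} [Ring R] (B E : R) (m n : ℕ) :
    B ^ m * (∑ i ∈ Finset.range n, B ^ i * E * B ^ (n - 1 - i))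
      - (∑ i ∈ Finset.range n, B ^ i * E * B ^ (n - 1 - i)) * B ^ m
    = (∑ i ∈ Finset.range (m + n), B ^ i * E * B ^ (m + n - 1 - i))
      - (∑ i ∈ Finset.range m, B ^ i * E * B ^ (m + n - 1 - i))
      - (∑ i ∈ Finset.range n, B ^ i * E * B ^ (m + n - 1 - i)) := by
  rw [pow_mul_sandwich, sandwich_mul_pow]
  rw [Finset.sum_range_add (fun i => B ^ i * E * B ^ (m + n - 1 - i)) m n]
  abel

theorem comm_sandwich_symm {R : Type*} [Ring R] (B E : R) (m n : ℕ) :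
    B ^ m * (∑ i ∈ Finset.range n, B ^ i * E * B ^ (n - 1 - i))
      - (∑ i ∈ Finset.range n, B ^ i * E * B ^ (n - 1 - i)) * B ^ m
    = B ^ n * (∑ i ∈ Finset.range m, B ^ i * E * B ^ (m - 1 - i))
      - (∑ i ∈ Finset.range m, B ^ i * E * B ^ (m - 1 - i)) * B ^ n := by
  rw [comm_sandwich, comm_sandwich]
  rw [Nat.add_comm n m]
  abel

/-! ### Row structure of the companion matrix -/

variable {k : ℕ}

theorem row_pow (hk : 1 ≤ k) (s : Fin k → ℂ) {a : ℕ} (ha : a ≤ k - 1) :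
    (LcompA k s ^ a) ⟨0, by omega⟩ = Pi.single (⟨a, by omega⟩ : Fin k) (1 : ℂ) := by
  induction a with
  | zero =>
    funext j
    rw [pow_zero]
    rcases eq_or_ne j ⟨0, by omega⟩ with h | h
    · subst h; simp [Matrix.one_apply]
    · rw [Matrix.one_apply_ne (Ne.symm h), Pi.single_apply, if_neg h]
  | succ a ih =>
    have ha' : a ≤ k - 1 := by omega
    have hak : a < k - 1 := by omega
    funext j
    rw [pow_succ, Matrix.mul_apply]
    rw [ih ha']
    rw [Finset.sum_eq_single (⟨a, by omega⟩ : Fin k)]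
    · rw [Pi.single_eq_same, one_mul]
      show (if (a : ℕ) = k - 1 then _ else if (j : ℕ) = a + 1 then (1:ℂ) else 0) = _
      rw [if_neg (by omega)]
      rw [Pi.single_apply]
      by_cases hj : j = (⟨a + 1, by omega⟩ : Fin k)
      · rw [if_pos hj, if_pos (by rw [hj])]
      · rw [if_neg hj, if_neg (by intro hc; apply hj; exact Fin.ext hc)]
    · intro b _ hb
      rw [Pi.single_eq_of_ne hb, zero_mul]
    · intro hb; exact absurd (Finset.mem_univ _) hb


/-! ### The characteristic polynomial -/

open Polynomial in
def cpoly (k : ℕ) (s : Fin k → ℂ) : Polynomial ℂ :=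
  X ^ k + ∑ i : Fin k, C ((-1 : ℂ) ^ ((i : ℕ) + 1) * s i) * X ^ (k - 1 - (i : ℕ))

open Polynomial in
theorem cpoly_eval (s : Fin k → ℂ) (z : ℂ) : (cpoly k s).eval z = LP k s z := by
  simp [cpoly, LP, eval_finset_sum]

open Polynomial in
theorem aeval_cpoly (s : Fin k → ℂ) :
    aeval (LcompA k s) (cpoly k s)
      = LcompA k s ^ k + ∑ i : Fin k,
          ((-1 : ℂ) ^ ((i : ℕ) + 1) * s i) • LcompA k s ^ (k - 1 - (i : ℕ)) := by
  simp [cpoly, map_sum, Algebra.smul_def]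

open Polynomial in
theorem row0_aeval_cpoly (hk : 1 ≤ k) (s : Fin k → ℂ) :
    (aeval (LcompA k s) (cpoly k s)) ⟨0, by omega⟩ = 0 := by
  rw [aeval_cpoly]
  funext j
  have hk1 : (LcompA k s ^ k) ⟨0, by omega⟩ j = LcompA k s ⟨k - 1, by omega⟩ j := by
    have hpow : LcompA k s ^ k = LcompA k s ^ (k - 1) * LcompA k s := by
      rw [← pow_succ]; congr 1; omega
    rw [hpow, Matrix.mul_apply]
    rw [show ((LcompA k s ^ (k-1)) ⟨0, by omega⟩ : Fin k → ℂ)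
        = Pi.single (⟨k - 1, by omega⟩ : Fin k) 1 from row_pow hk s le_rfl]
    rw [Finset.sum_eq_single (⟨k - 1, by omega⟩ : Fin k)]
    · rw [Pi.single_eq_same, one_mul]
    · intro b _ hb; rw [Pi.single_eq_of_ne hb, zero_mul]
    · intro hb; exact absurd (Finset.mem_univ _) hb
  rw [Matrix.add_apply, hk1]
  have hsum : (∑ i : Fin k, ((-1 : ℂ) ^ ((i : ℕ) + 1) * s i) •
        LcompA k s ^ (k - 1 - (i : ℕ))) ⟨0, by omega⟩ j
      = (-1 : ℂ) ^ ((k - 1 - (j : ℕ)) + 1) * s ⟨k - 1 - (j : ℕ), by have := j.isLt; omega⟩ := by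
    rw [Matrix.sum_apply]
    rw [Finset.sum_eq_single (⟨k - 1 - (j : ℕ), by have := j.isLt; omega⟩ : Fin k)]
    · rw [Matrix.smul_apply]
      rw [show ((LcompA k s ^ (k - 1 - ((k - 1 - (j : ℕ)))) ) ⟨0, by omega⟩ : Fin k → ℂ)
          = Pi.single (⟨k - 1 - (k - 1 - (j : ℕ)), by omega⟩ : Fin k) 1 from
            row_pow hk s (by omega)]
      have hjj : (⟨k - 1 - (k - 1 - (j : ℕ)), by omega⟩ : Fin k) = j := by
        apply Fin.ext; simp only []; have := j.isLt; omega
      rw [hjj, Pi.single_eq_same, smul_eq_mul, mul_one]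
    · intro b _ hb
      rw [Matrix.smul_apply]
      rw [show ((LcompA k s ^ (k - 1 - (b : ℕ))) ⟨0, by omega⟩ : Fin k → ℂ)
          = Pi.single (⟨k - 1 - (b : ℕ), by have := b.isLt; omega⟩ : Fin k) 1 from
            row_pow hk s (by omega)]
      rw [Pi.single_eq_of_ne, smul_zero]
      intro hc
      apply hb
      apply Fin.ext
      have : (j : ℕ) = k - 1 - (b : ℕ) := by
        have := congrArg Fin.val hc; simpa using this
      have hb' := b.isLt; have hj' := j.isLt
      simp only []; omega
    · intro hb; exact absurd (Finset.mem_univ _) hb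
  rw [hsum]
  have hA : LcompA k s ⟨k - 1, by omega⟩ j
      = (-1 : ℂ) ^ (k - 1 - (j : ℕ)) * s ⟨k - 1 - (j : ℕ), by have := j.isLt; omega⟩ := by
    show (if (k - 1 : ℕ) = k - 1 then _ else _) = _
    rw [if_pos rfl]
  rw [hA, Pi.zero_apply, pow_succ]
  ring

open Polynomial in
theorem aeval_cpoly_eq_zero (hk : 1 ≤ k) (s : Fin k → ℂ) :
    aeval (LcompA k s) (cpoly k s) = 0 := by
  set A := LcompA k s
  set M := aeval A (cpoly k s) with hM
  have hcomm : ∀ r : ℕ, M * A ^ r = A ^ r * M := by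
    intro r
    have hXr : aeval A ((X : ℂ[X]) ^ r) = A ^ r := by rw [map_pow, aeval_X]
    rw [hM, ← hXr, ← _root_.map_mul, ← _root_.map_mul, mul_comm]
  have hrow0 : M ⟨0, by omega⟩ = 0 := row0_aeval_cpoly hk s
  funext r j
  have hr : (r : ℕ) ≤ k - 1 := by have := r.isLt; omega
  have h1 : (A ^ (r : ℕ) * M) ⟨0, by omega⟩ j = M r j := by
    rw [Matrix.mul_apply]
    rw [show ((A ^ (r : ℕ)) ⟨0, by omega⟩ : Fin k → ℂ)
        = Pi.single (⟨(r : ℕ), by have := r.isLt; omega⟩ : Fin k) 1 from row_pow hk s hr]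
    rw [Finset.sum_eq_single (⟨(r : ℕ), by have := r.isLt; omega⟩ : Fin k)]
    · rw [Pi.single_eq_same, one_mul]
    · intro b _ hb; rw [Pi.single_eq_of_ne hb, zero_mul]
    · intro hb; exact absurd (Finset.mem_univ _) hb
  have h2 : (M * A ^ (r : ℕ)) ⟨0, by omega⟩ j = 0 := by
    rw [Matrix.mul_apply]
    apply Finset.sum_eq_zero
    intro b _
    have : M ⟨0, by omega⟩ b = 0 := by rw [hrow0]; rfl
    rw [this, zero_mul]
  have := h2
  rw [hcomm, h1] at this
  simpa using this

open Polynomial in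
theorem cpoly_monic (hk : 1 ≤ k) (s : Fin k → ℂ) : (cpoly k s).Monic := by
  apply monic_X_pow_add
  apply lt_of_le_of_lt (degree_sum_le _ _)
  rw [Finset.sup_lt_iff (by exact_mod_cast WithBot.bot_lt_coe k)]
  intro i _
  apply lt_of_le_of_lt (degree_C_mul_X_pow_le _ _)
  exact_mod_cast Nat.lt_of_le_of_lt (Nat.sub_le _ _) (by omega)

open Polynomial in
theorem cpoly_degree (hk : 1 ≤ k) (s : Fin k → ℂ) : (cpoly k s).degree = k := by
  rw [cpoly, degree_add_eq_left_of_degree_lt, degree_X_pow]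
  rw [degree_X_pow]
  apply lt_of_le_of_lt (degree_sum_le _ _)
  rw [Finset.sup_lt_iff (by exact_mod_cast WithBot.bot_lt_coe k)]
  intro i _
  apply lt_of_le_of_lt (degree_C_mul_X_pow_le _ _)
  exact_mod_cast Nat.lt_of_le_of_lt (Nat.sub_le _ _) (by omega)

open Polynomial in
theorem cpoly_eq_prod (hk : 1 ≤ k) (s : Fin k → ℂ) (z : Fin k → ℂ)
    (hz : Function.Injective z) (hroots : ∀ j, LP k s (z j) = 0) :
    cpoly k s = ∏ j : Fin k, (X - C (z j)) := by
  set q : ℂ[X] := ∏ j : Fin k, (X - C (z j)) with hq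
  have hqmonic : q.Monic := monic_prod_of_monic _ _ fun j _ => monic_X_sub_C (z j)
  have hqdeg : q.degree = k := by
    rw [hq, degree_prod]
    simp [degree_X_sub_C]
  have hsub : cpoly k s - q = 0 := by
    rcases eq_or_ne (cpoly k s) q with h | h
    · rw [h, sub_self]
    · have hdeglt : (cpoly k s - q).degree < k := by
        rw [← cpoly_degree hk s]
        apply degree_sub_lt
        · rw [cpoly_degree hk s, hqdeg]
        · exact (cpoly_monic hk s).ne_zero
        · rw [(cpoly_monic hk s).leadingCoeff, hqmonic.leadingCoeff]
      apply eq_zero_of_natDegree_lt_card_of_eval_eq_zero _ hz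
      · intro j
        rw [eval_sub, cpoly_eval, hroots j, eval_prod]
        rw [Finset.prod_eq_zero (Finset.mem_univ j) (by simp), sub_zero]
      · rw [Fintype.card_fin]
        rcases eq_or_ne (cpoly k s - q) 0 with h0 | h0
        · rw [h0]; simpa [natDegree_zero] using by omega
        · exact natDegree_lt_iff_degree_lt h0 |>.mpr (by exact_mod_cast hdeglt)
  linear_combination (norm := ring_nf) hsub


open Polynomial in
theorem aeval_deriv_cpoly (hk : 1 ≤ k) (s : Fin k → ℂ) :
    aeval (LcompA k s) (derivative (cpoly k s)) = LPprimeA k s := by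
  have hder : derivative (cpoly k s)
      = C (k : ℂ) * X ^ (k - 1) + ∑ i : Fin k,
          C ((-1 : ℂ) ^ ((i : ℕ) + 1) * s i * ((k - 1 - (i : ℕ) : ℕ) : ℂ))
            * X ^ (k - 2 - (i : ℕ)) := by
    rw [cpoly, derivative_add, derivative_X_pow, map_sum]
    congr 1
    refine Finset.sum_congr rfl fun i _ => ?_
    rw [derivative_C_mul_X_pow]
    have : k - 1 - (i : ℕ) - 1 = k - 2 - (i : ℕ) := by omega
    rw [this]
  rw [hder, map_add, map_sum]
  rw [LPprimeA]
  congr 1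
  · rw [_root_.map_mul, aeval_C, map_pow, aeval_X, Algebra.algebraMap_eq_smul_one,
      smul_mul_assoc, one_mul]
  · refine Finset.sum_congr rfl fun i _ => ?_
    rw [_root_.map_mul, aeval_C, map_pow, aeval_X, Algebra.algebraMap_eq_smul_one,
      smul_mul_assoc, one_mul]
    congr 1
    ring

open Polynomial in
theorem isUnit_LPprimeA (hk : 1 ≤ k) (s : Fin k → ℂ) (z : Fin k → ℂ)
    (hz : Function.Injective z) (hroots : ∀ j, LP k s (z j) = 0) :
    IsUnit (LPprimeA k s) := by
  have hsep : (cpoly k s).Separable := by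
    rw [cpoly_eq_prod hk s z hz hroots]
    exact (separable_prod_X_sub_C_iff).2 hz
  obtain ⟨a, b, hab⟩ := hsep
  have := congrArg (aeval (LcompA k s)) hab
  rw [map_add, _root_.map_mul, _root_.map_mul, _root_.map_one, aeval_cpoly_eq_zero hk s,
    mul_zero, zero_add, aeval_deriv_cpoly hk s] at this
  exact ⟨⟨LPprimeA k s, aeval (LcompA k s) b, mul_eq_one_comm.mp this, this⟩, rfl⟩

theorem inv_mulVec_cancel (hk : 1 ≤ k) (s : Fin k → ℂ) (z : Fin k → ℂ)
    (hz : Function.Injective z) (hroots : ∀ j, LP k s (z j) = 0) (x : Fin k → ℂ) :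
    (LPprimeA k s)⁻¹ *ᵥ (LPprimeA k s *ᵥ x) = x := by
  rw [Matrix.mulVec_mulVec, Matrix.nonsing_inv_mul _
    ((Matrix.isUnit_iff_isUnit_det _).mp (isUnit_LPprimeA hk s z hz hroots)), Matrix.one_mulVec]


/-! ### Analysis layer -/

attribute [local instance] Matrix.linftyOpNormedRing Matrix.linftyOpNormedAlgebra

def dAlin (k : ℕ) : (Fin k → ℂ) →ₗ[ℂ] Matrix (Fin k) (Fin k) ℂ where
  toFun v := fun i j =>
    if (i : ℕ) = k - 1 then
      (-1 : ℂ) ^ (k - 1 - (j : ℕ)) * v ⟨k - 1 - (j : ℕ), by have := j.isLt; omega⟩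
    else 0
  map_add' v w := by
    funext i j
    show (if (i : ℕ) = k - 1 then _ else _ : ℂ) = (if (i : ℕ) = k - 1 then _ else _ : ℂ) + (if (i : ℕ) = k - 1 then _ else _ : ℂ)
    split_ifs with hi
    · rw [Pi.add_apply]; ring
    · rw [add_zero]
  map_smul' c v := by
    funext i j
    show (if (i : ℕ) = k - 1 then _ else _ : ℂ) = c • (if (i : ℕ) = k - 1 then _ else _ : ℂ)
    split_ifs with hi
    · rw [Pi.smul_apply, smul_eq_mul, smul_eq_mul]; ring
    · rw [smul_zero]

def dA (k : ℕ) : (Fin k → ℂ) →L[ℂ] Matrix (Fin k) (Fin k) ℂ :=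
  LinearMap.toContinuousLinearMap (dAlin k)

theorem dA_apply (v : Fin k → ℂ) : dA k v = dAlin k v := rfl

theorem hasFDerivAt_LcompA (s : Fin k → ℂ) : HasFDerivAt (LcompA k) (dA k) s := by
  have h : LcompA k = fun t => dA k t + LcompA k 0 := by
    funext t i j
    show LcompA k t i j = (if (i : ℕ) = k - 1 then (-1 : ℂ) ^ (k - 1 - (j : ℕ)) * t ⟨k - 1 - (j : ℕ), by have := j.isLt; omega⟩ else 0) + LcompA k 0 i j
    by_cases hi : (i : ℕ) = k - 1 <;>
      simp [LcompA, dAlin, hi, LinearMap.coe_mk, AddHom.coe_mk]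
  rw [h]
  exact (dA k).hasFDerivAt.add_const _

def LRc (B C : Matrix (Fin k) (Fin k) ℂ) :
    Matrix (Fin k) (Fin k) ℂ →L[ℂ] Matrix (Fin k) (Fin k) ℂ :=
  LinearMap.toContinuousLinearMap
    { toFun := fun X => B * X * C
      map_add' := fun X Y => by simp only [Matrix.mul_add, Matrix.add_mul]
      map_smul' := fun c X => by
        simp only [RingHom.id_apply, Matrix.mul_smul, Matrix.smul_mul] }

theorem LRc_apply (B C X : Matrix (Fin k) (Fin k) ℂ) : LRc B C X = B * X * C := rfl

def Dpow (k m : ℕ) (s : Fin k → ℂ) : (Fin k → ℂ) →L[ℂ] Matrix (Fin k) (Fin k) ℂ :=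
  ∑ i ∈ Finset.range m, (LRc (LcompA k s ^ i) (LcompA k s ^ (m - 1 - i))).comp (dA k)

theorem Dpow_apply (m : ℕ) (s : Fin k → ℂ) (v : Fin k → ℂ) :
    Dpow k m s v = ∑ i ∈ Finset.range m,
      LcompA k s ^ i * dAlin k v * LcompA k s ^ (m - 1 - i) := by
  rw [Dpow, ContinuousLinearMap.sum_apply]
  rfl

theorem hasFDerivAt_pow (m : ℕ) (s : Fin k → ℂ) :
    HasFDerivAt (fun t => LcompA k t ^ m) (Dpow k m s) s := by
  induction m with
  | zero =>
    have h : (fun t : Fin k → ℂ => LcompA k t ^ 0) = fun _ => (1 : Matrix (Fin k) (Fin k) ℂ) := by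
      funext t; rw [pow_zero]
    rw [h, Dpow, Finset.range_zero, Finset.sum_empty]
    exact hasFDerivAt_const _ _
  | succ m ih =>
    have h := ih.mul' (hasFDerivAt_LcompA s)
    have heq : ((fun t => LcompA k t ^ m) * LcompA k) = fun t => LcompA k t ^ (m + 1) := by
      funext t; show LcompA k t ^ m * LcompA k t = _; rw [← pow_succ]
    rw [heq] at h
    refine h.congr_fderiv ?_; symm
    refine ContinuousLinearMap.ext fun v => ?_
    show Dpow k (m + 1) s v
      = LcompA k s ^ m • dA k v + MulOpposite.op (LcompA k s) • Dpow k m s v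
    rw [op_smul_eq_mul, Dpow_apply, Dpow_apply,
      Finset.sum_range_succ, dA_apply]
    simp only [smul_eq_mul]
    have h0 : m + 1 - 1 - m = 0 := by omega
    rw [h0, pow_zero, mul_one, Finset.sum_mul, add_comm]
    congr 1
    refine Finset.sum_congr rfl fun i hi => ?_
    have hi' := Finset.mem_range.mp hi
    have h1 : m + 1 - 1 - i = (m - 1 - i) + 1 := by omega
    rw [h1, pow_succ, ← mul_assoc]

def mulVecCLM (k : ℕ) :
    Matrix (Fin k) (Fin k) ℂ →L[ℂ] (Fin k → ℂ) →L[ℂ] (Fin k → ℂ) :=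
  LinearMap.toContinuousLinearMap
    { toFun := fun M => LinearMap.toContinuousLinearMap (Matrix.mulVecLin M)
      map_add' := fun M N => by
        refine ContinuousLinearMap.ext fun v => ?_
        show (M + N) *ᵥ v = M *ᵥ v + N *ᵥ v
        rw [Matrix.add_mulVec]
      map_smul' := fun c M => by
        refine ContinuousLinearMap.ext fun v => ?_
        show (c • M) *ᵥ v = c • (M *ᵥ v)
        rw [Matrix.smul_mulVec] }

theorem mulVecCLM_apply (M : Matrix (Fin k) (Fin k) ℂ) (v : Fin k → ℂ) :
    mulVecCLM k M v = M *ᵥ v := rfl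

theorem mulVecCLM_flip_comp_apply (x : Fin k → ℂ)
    (L : (Fin k → ℂ) →L[ℂ] Matrix (Fin k) (Fin k) ℂ) (v : Fin k → ℂ) :
    (((mulVecCLM k).flip x).comp L) v = L v *ᵥ x := rfl

theorem hasFDerivAt_mulVec {B : (Fin k → ℂ) → Matrix (Fin k) (Fin k) ℂ}
    {Ψ : (Fin k → ℂ) → Fin k → ℂ}
    {B' : (Fin k → ℂ) →L[ℂ] Matrix (Fin k) (Fin k) ℂ}
    {Ψ' : (Fin k → ℂ) →L[ℂ] Fin k → ℂ} {s : Fin k → ℂ}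
    (hB : HasFDerivAt B B' s) (hΨ : HasFDerivAt Ψ Ψ' s) :
    HasFDerivAt (fun t => B t *ᵥ Ψ t)
      (((mulVecCLM k).flip (Ψ s)).comp B' + ((mulVecCLM k (B s)).comp Ψ')) s := by
  have h := ((mulVecCLM k).isBoundedBilinearMap.hasFDerivAt (B s, Ψ s)).comp s (HasFDerivAt.prodMk hB hΨ)
  refine h.congr_fderiv ?_; symm
  refine ContinuousLinearMap.ext fun v => ?_
  rw [ContinuousLinearMap.add_apply, ContinuousLinearMap.comp_apply,
    ContinuousLinearMap.comp_apply]
  show mulVecCLM k (B' v) (Ψ s) + mulVecCLM k (B s) (Ψ' v)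
    = (mulVecCLM k).isBoundedBilinearMap.deriv (B s, Ψ s) ((B'.prod Ψ') v)
  rw [IsBoundedBilinearMap.deriv_apply]
  exact add_comm _ _


/-! ### Evaluations in coordinate directions -/

def E0 (k : ℕ) (hk : 2 ≤ k) : Matrix (Fin k) (Fin k) ℂ :=
  Matrix.single (⟨k - 1, by omega⟩ : Fin k) (⟨0, by omega⟩ : Fin k) 1

def Sn (k : ℕ) (s : Fin k → ℂ) (hk : 2 ≤ k) (n : ℕ) : Matrix (Fin k) (Fin k) ℂ :=
  ∑ i ∈ Finset.range n, LcompA k s ^ i * E0 k hk * LcompA k s ^ (n - 1 - i)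

def Wm (k : ℕ) (s : Fin k → ℂ) (hk : 2 ≤ k) : Matrix (Fin k) (Fin k) ℂ :=
  (k : ℂ) • Sn k s hk (k - 1) + ∑ i : Fin k,
    ((-1 : ℂ) ^ ((i : ℕ) + 1) * ((k - 1 - (i : ℕ) : ℕ) : ℂ) * s i) • Sn k s hk (k - 2 - (i : ℕ))

theorem dAlin_single (hk : 2 ≤ k) (c : ℕ) (hc : c < k) :
    dAlin k (Pi.single (⟨c, hc⟩ : Fin k) (1 : ℂ))
      = (-1 : ℂ) ^ c •
          Matrix.single (⟨k - 1, by omega⟩ : Fin k) (⟨k - 1 - c, by omega⟩ : Fin k) 1 := by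
  funext i j
  show (if _ then _ else _) = _
  rw [Matrix.smul_apply, Matrix.single, Matrix.of_apply]
  split_ifs with hi h2 h2
  · -- i = k-1 and the std condition holds
    obtain ⟨hp, hq⟩ := h2
    have hq' : (j : ℕ) = k - 1 - c := by rw [← hq]
    have : k - 1 - (j : ℕ) = c := by have := j.isLt; omega
    rw [Pi.single_apply, if_pos (by apply Fin.ext; simpa using this)]
    rw [smul_eq_mul, mul_one, mul_one, this]
  · -- i = k-1 but std condition fails: k-1-j ≠ c
    rw [Pi.single_apply, if_neg, mul_zero, smul_zero]
    intro hcon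
    apply h2
    have hval : k - 1 - (j : ℕ) = c := by simpa using congrArg Fin.val hcon
    constructor
    · apply Fin.ext; simpa using hi.symm
    · apply Fin.ext; have := j.isLt; simp; omega
  · exfalso; obtain ⟨hp, hq⟩ := h2; exact hi (by simpa using (congrArg Fin.val hp).symm)
  · rw [smul_zero]

theorem std_shift (hk : 2 ≤ k) (s : Fin k → ℂ) {j : ℕ} (hj : j ≤ k - 1) :
    Matrix.single (⟨k - 1, by omega⟩ : Fin k) (⟨j, by omega⟩ : Fin k) (1 : ℂ)
      = E0 k hk * LcompA k s ^ j := by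
  funext p q
  rw [Matrix.mul_apply]
  rw [Finset.sum_eq_single (⟨0, by omega⟩ : Fin k)]
  · rw [show ((LcompA k s ^ j) ⟨0, by omega⟩ : Fin k → ℂ)
        = Pi.single (⟨j, by omega⟩ : Fin k) 1 from row_pow (by omega) s hj]
    rw [E0, Matrix.single, Matrix.single, Matrix.of_apply, Matrix.of_apply]
    rw [Pi.single_apply]
    by_cases hp : (⟨k - 1, by omega⟩ : Fin k) = p
    · by_cases hq : q = (⟨j, by omega⟩ : Fin k)
      · rw [if_pos ⟨hp, hq.symm⟩, if_pos ⟨hp, rfl⟩, if_pos hq, one_mul]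
      · rw [if_neg (fun hcon => hq hcon.2.symm), if_pos ⟨hp, rfl⟩, if_neg hq, one_mul]
    · rw [if_neg (fun hcon => hp hcon.1), if_neg (fun hcon => hp hcon.1), zero_mul]
  · intro b _ hb
    rw [E0, Matrix.single, Matrix.of_apply, if_neg (fun hcon => hb hcon.2.symm), zero_mul]
  · intro hb; exact absurd (Finset.mem_univ _) hb

theorem Dpow_single (hk : 2 ≤ k) (s : Fin k → ℂ) (n c : ℕ) (hc : c < k) :
    Dpow k n s (Pi.single (⟨c, hc⟩ : Fin k) (1 : ℂ))
      = (-1 : ℂ) ^ c • (Sn k s hk n * LcompA k s ^ (k - 1 - c)) := by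
  rw [Dpow_apply, dAlin_single hk c hc, std_shift hk s (by omega : k - 1 - c ≤ k - 1),
    Sn, Finset.sum_mul, Finset.smul_sum]
  refine Finset.sum_congr rfl fun i hi => ?_
  rw [mul_smul_comm, smul_mul_assoc]
  congr 1
  rw [mul_assoc, mul_assoc, mul_assoc, mul_assoc]
  congr 1
  congr 1
  rw [← pow_add, ← pow_add, Nat.add_comm]

def cL (k : ℕ) (i : Fin k) : (Fin k → ℂ) →L[ℂ] ℂ :=
  ((-1 : ℂ) ^ ((i : ℕ) + 1) * ((k - 1 - (i : ℕ) : ℕ) : ℂ)) • ContinuousLinearMap.proj i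

theorem cL_apply (i : Fin k) (v : Fin k → ℂ) :
    cL k i v = (-1 : ℂ) ^ ((i : ℕ) + 1) * ((k - 1 - (i : ℕ) : ℕ) : ℂ) * v i := by
  rw [cL, ContinuousLinearMap.smul_apply, ContinuousLinearMap.proj_apply, smul_eq_mul]

def DPprime (k : ℕ) (s : Fin k → ℂ) : (Fin k → ℂ) →L[ℂ] Matrix (Fin k) (Fin k) ℂ :=
  (k : ℂ) • Dpow k (k - 1) s + ∑ i : Fin k,
    (((-1 : ℂ) ^ ((i : ℕ) + 1) * ((k - 1 - (i : ℕ) : ℕ) : ℂ) * s i) • Dpow k (k - 2 - (i : ℕ)) s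
      + (cL k i).smulRight (LcompA k s ^ (k - 2 - (i : ℕ))))

theorem hasFDerivAt_LPprimeA (s : Fin k → ℂ) :
    HasFDerivAt (LPprimeA k) (DPprime k s) s := by
  have h1 : HasFDerivAt (fun t : Fin k → ℂ => (k : ℂ) • LcompA k t ^ (k - 1))
      ((k : ℂ) • Dpow k (k - 1) s) s := by
      have h := (hasFDerivAt_pow (k - 1) s).const_smul (k : ℂ); exact h
  have h2 : ∀ i : Fin k, HasFDerivAt
      (fun t : Fin k → ℂ =>
        ((-1 : ℂ) ^ ((i : ℕ) + 1) * ((k - 1 - (i : ℕ) : ℕ) : ℂ) * t i) •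
          LcompA k t ^ (k - 2 - (i : ℕ)))
      (((-1 : ℂ) ^ ((i : ℕ) + 1) * ((k - 1 - (i : ℕ) : ℕ) : ℂ) * s i) •
          Dpow k (k - 2 - (i : ℕ)) s
        + (cL k i).smulRight (LcompA k s ^ (k - 2 - (i : ℕ)))) s := by
    intro i
    have hc : HasFDerivAt
        (fun t : Fin k → ℂ => (-1 : ℂ) ^ ((i : ℕ) + 1) * ((k - 1 - (i : ℕ) : ℕ) : ℂ) * t i)
        (cL k i) s := by
      have heq : (fun t : Fin k → ℂ =>
          (-1 : ℂ) ^ ((i : ℕ) + 1) * ((k - 1 - (i : ℕ) : ℕ) : ℂ) * t i) = fun t => cL k i t := by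
        funext t; rw [cL_apply]
      rw [heq]
      exact (cL k i).hasFDerivAt
    exact hc.smul (hasFDerivAt_pow (k - 2 - (i : ℕ)) s)
  have := h1.add (HasFDerivAt.sum (fun i (_ : i ∈ Finset.univ) => h2 i))
  have heq : LPprimeA k = fun t => (k : ℂ) • LcompA k t ^ (k - 1) + ∑ i : Fin k,
      ((-1 : ℂ) ^ ((i : ℕ) + 1) * ((k - 1 - (i : ℕ) : ℕ) : ℂ) * t i) •
        LcompA k t ^ (k - 2 - (i : ℕ)) := by
    funext t; rw [LPprimeA]
  rw [heq, DPprime]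
  simp only [Finset.sum_fn, Pi.add_def] at this
  exact this


theorem cL_single (i : Fin k) (c : ℕ) (hc : c < k) :
    cL k i (Pi.single (⟨c, hc⟩ : Fin k) (1 : ℂ))
      = if i = (⟨c, hc⟩ : Fin k) then
          (-1 : ℂ) ^ (c + 1) * ((k - 1 - c : ℕ) : ℂ) else 0 := by
  rw [cL_apply, Pi.single_apply]
  split_ifs with h
  · subst h; rw [mul_one]
  · rw [mul_zero]

theorem DPprime_single (hk : 2 ≤ k) (s : Fin k → ℂ) (c : ℕ) (hc : c < k) :
    DPprime k s (Pi.single (⟨c, hc⟩ : Fin k) (1 : ℂ))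
      = (-1 : ℂ) ^ c • (Wm k s hk * LcompA k s ^ (k - 1 - c))
        + ((-1 : ℂ) ^ (c + 1) * ((k - 1 - c : ℕ) : ℂ)) • LcompA k s ^ (k - 2 - c) := by
  rw [DPprime, ContinuousLinearMap.add_apply, ContinuousLinearMap.smul_apply,
    ContinuousLinearMap.sum_apply]
  simp only [ContinuousLinearMap.add_apply, ContinuousLinearMap.smul_apply,
    ContinuousLinearMap.smulRight_apply]
  rw [Finset.sum_add_distrib]
  have hsum2 : (∑ i : Fin k, cL k i (Pi.single (⟨c, hc⟩ : Fin k) (1 : ℂ)) •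
      LcompA k s ^ (k - 2 - (i : ℕ)))
      = ((-1 : ℂ) ^ (c + 1) * ((k - 1 - c : ℕ) : ℂ)) • LcompA k s ^ (k - 2 - c) := by
    rw [Finset.sum_eq_single (⟨c, hc⟩ : Fin k)]
    · rw [cL_single, if_pos rfl]
    · intro b _ hb
      rw [cL_single, if_neg hb, zero_smul]
    · intro hb; exact absurd (Finset.mem_univ _) hb
  rw [hsum2, ← add_assoc]
  congr 1
  rw [Wm, add_mul, Finset.sum_mul, smul_add, Finset.smul_sum]
  congr 1
  · rw [Dpow_single hk s (k - 1) c hc, smul_comm, smul_mul_assoc]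
  · refine Finset.sum_congr rfl fun i _ => ?_
    rw [Dpow_single hk s (k - 2 - (i : ℕ)) c hc, smul_comm, smul_mul_assoc]


theorem Pprime_comm_pow (s : Fin k → ℂ) (n : ℕ) :
    LPprimeA k s * LcompA k s ^ n = LcompA k s ^ n * LPprimeA k s := by
  rw [LPprimeA, add_mul, mul_add, smul_mul_assoc, mul_smul_comm,
    ((Commute.refl (LcompA k s)).pow_pow (k - 1) n).eq, Finset.sum_mul, Finset.mul_sum]
  congr 1
  refine Finset.sum_congr rfl fun i _ => ?_
  rw [smul_mul_assoc, mul_smul_comm, ((Commute.refl (LcompA k s)).pow_pow _ _).eq]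

theorem Sn_comm_symm (hk : 2 ≤ k) (s : Fin k → ℂ) (m n : ℕ) :
    LcompA k s ^ m * Sn k s hk n - Sn k s hk n * LcompA k s ^ m
      = LcompA k s ^ n * Sn k s hk m - Sn k s hk m * LcompA k s ^ n := by
  simp only [Sn]
  exact comm_sandwich_symm _ _ m n

theorem expand_comm (hk : 2 ≤ k) (s : Fin k → ℂ) (M : Matrix (Fin k) (Fin k) ℂ) :
    LPprimeA k s * M - M * LPprimeA k s
      = (k : ℂ) • (LcompA k s ^ (k - 1) * M - M * LcompA k s ^ (k - 1))
        + ∑ i : Fin k, ((-1 : ℂ) ^ ((i : ℕ) + 1) * ((k - 1 - (i : ℕ) : ℕ) : ℂ) * s i) •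
            (LcompA k s ^ (k - 2 - (i : ℕ)) * M - M * LcompA k s ^ (k - 2 - (i : ℕ))) := by
  have h1 : LPprimeA k s * M
      = (k : ℂ) • (LcompA k s ^ (k - 1) * M) + ∑ i : Fin k,
          ((-1 : ℂ) ^ ((i : ℕ) + 1) * ((k - 1 - (i : ℕ) : ℕ) : ℂ) * s i) •
            (LcompA k s ^ (k - 2 - (i : ℕ)) * M) := by
    rw [LPprimeA, add_mul, smul_mul_assoc, Finset.sum_mul]
    congr 1
    exact Finset.sum_congr rfl fun i _ => smul_mul_assoc _ _ _
  have h2 : M * LPprimeA k s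
      = (k : ℂ) • (M * LcompA k s ^ (k - 1)) + ∑ i : Fin k,
          ((-1 : ℂ) ^ ((i : ℕ) + 1) * ((k - 1 - (i : ℕ) : ℕ) : ℂ) * s i) •
            (M * LcompA k s ^ (k - 2 - (i : ℕ))) := by
    rw [LPprimeA, mul_add, mul_smul_comm, Finset.mul_sum]
    congr 1
    exact Finset.sum_congr rfl fun i _ => mul_smul_comm _ _ _
  rw [h1, h2]
  simp only [smul_sub]
  rw [Finset.sum_sub_distrib]
  abel

theorem expand_comm_W (hk : 2 ≤ k) (s : Fin k → ℂ) (m : ℕ) :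
    LcompA k s ^ m * Wm k s hk - Wm k s hk * LcompA k s ^ m
      = (k : ℂ) • (LcompA k s ^ m * Sn k s hk (k - 1) - Sn k s hk (k - 1) * LcompA k s ^ m)
        + ∑ i : Fin k, ((-1 : ℂ) ^ ((i : ℕ) + 1) * ((k - 1 - (i : ℕ) : ℕ) : ℂ) * s i) •
            (LcompA k s ^ m * Sn k s hk (k - 2 - (i : ℕ))
              - Sn k s hk (k - 2 - (i : ℕ)) * LcompA k s ^ m) := by
  have h1 : LcompA k s ^ m * Wm k s hk
      = (k : ℂ) • (LcompA k s ^ m * Sn k s hk (k - 1)) + ∑ i : Fin k,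
          ((-1 : ℂ) ^ ((i : ℕ) + 1) * ((k - 1 - (i : ℕ) : ℕ) : ℂ) * s i) •
            (LcompA k s ^ m * Sn k s hk (k - 2 - (i : ℕ))) := by
    rw [Wm, mul_add, mul_smul_comm, Finset.mul_sum]
    congr 1
    exact Finset.sum_congr rfl fun i _ => mul_smul_comm _ _ _
  have h2 : Wm k s hk * LcompA k s ^ m
      = (k : ℂ) • (Sn k s hk (k - 1) * LcompA k s ^ m) + ∑ i : Fin k,
          ((-1 : ℂ) ^ ((i : ℕ) + 1) * ((k - 1 - (i : ℕ) : ℕ) : ℂ) * s i) •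
            (Sn k s hk (k - 2 - (i : ℕ)) * LcompA k s ^ m) := by
    rw [Wm, add_mul, smul_mul_assoc, Finset.sum_mul]
    congr 1
    exact Finset.sum_congr rfl fun i _ => smul_mul_assoc _ _ _
  rw [h1, h2]
  simp only [smul_sub]
  rw [Finset.sum_sub_distrib]
  abel

theorem key_comm (hk : 2 ≤ k) (s : Fin k → ℂ) (m : ℕ) :
    LPprimeA k s * Sn k s hk m - Sn k s hk m * LPprimeA k s
      = LcompA k s ^ m * Wm k s hk - Wm k s hk * LcompA k s ^ m := by
  rw [expand_comm hk s, expand_comm_W hk s]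
  congr 1
  · rw [Sn_comm_symm hk s (k - 1) m]
  · refine Finset.sum_congr rfl fun i _ => ?_
    rw [Sn_comm_symm hk s (k - 2 - (i : ℕ)) m]


set_option maxHeartbeats 1000000 in
theorem main_matrix (hk : 2 ≤ k) (s : Fin k → ℂ) (h : ℕ) (h1 : 1 ≤ h) (h2 : h ≤ k - 1) :
    ((-1 : ℂ) ^ (k + h)) • DPprime k s (Pi.single (⟨h - 1, by omega⟩ : Fin k) (1 : ℂ))
      + LPprimeA k s * Dpow k (k - h) s (Pi.single (⟨k - 1, by omega⟩ : Fin k) (1 : ℂ))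
    = Dpow k (k - h) s (Pi.single (⟨k - 1, by omega⟩ : Fin k) (1 : ℂ)) * LPprimeA k s
      + LcompA k s ^ (k - h) * DPprime k s (Pi.single (⟨k - 1, by omega⟩ : Fin k) (1 : ℂ))
      + ((-1 : ℂ) ^ k * ((k - h : ℕ) : ℂ)) • LcompA k s ^ (k - h - 1) := by
  have e1 : k - 1 - (k - 1) = 0 := by omega
  have e2 : k - 1 - (h - 1) = k - h := by omega
  have e3 : k - 2 - (h - 1) = k - h - 1 := by omega
  have e4 : (h - 1) + 1 = h := by omega
  rw [Dpow_single hk s (k - h) (k - 1) (by omega), DPprime_single hk s (k - 1) (by omega),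
      DPprime_single hk s (h - 1) (by omega), e1, e2, e3, e4]
  rw [pow_zero, mul_one, Nat.cast_zero, mul_zero, zero_smul, add_zero]
  have hs1 : (-1 : ℂ) ^ (k + h) * (-1 : ℂ) ^ (h - 1) = (-1 : ℂ) ^ (k - 1) := by
    rw [← pow_add]
    have : k + h + (h - 1) = (k - 1) + 2 * h := by omega
    rw [this, pow_add, pow_mul, neg_one_sq, one_pow, mul_one]
  have hs2 : (-1 : ℂ) ^ (k + h) * ((-1 : ℂ) ^ h * ((k - h : ℕ) : ℂ))
      = (-1 : ℂ) ^ k * ((k - h : ℕ) : ℂ) := by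
    rw [← mul_assoc, ← pow_add]
    have : k + h + h = k + 2 * h := by omega
    rw [this, pow_add, pow_mul, neg_one_sq, one_pow, mul_one]
  rw [smul_add, smul_smul, smul_smul, hs1, hs2, mul_smul_comm, smul_mul_assoc, mul_smul_comm]
  have hkey := key_comm hk s (k - h)
  rw [sub_eq_sub_iff_add_eq_add] at hkey
  rw [mul_one]
  have hfin : (-1 : ℂ) ^ (k - 1) • (Wm k s hk * LcompA k s ^ (k - h))
      + (-1 : ℂ) ^ (k - 1) • (LPprimeA k s * Sn k s hk (k - h))
      = (-1 : ℂ) ^ (k - 1) • (Sn k s hk (k - h) * LPprimeA k s)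
      + (-1 : ℂ) ^ (k - 1) • (LcompA k s ^ (k - h) * Wm k s hk) := by
    rw [← smul_add, ← smul_add, add_comm (Wm k s hk * LcompA k s ^ (k - h)), hkey,
      add_comm (LcompA k s ^ (k - h) * Wm k s hk)]
  have hthis := congrArg
    (fun X => X + ((-1 : ℂ) ^ k * ((k - h : ℕ) : ℂ)) • LcompA k s ^ (k - h - 1)) hfin
  abel_nf at hthis ⊢
  exact hthis


end St16

section FinalProof

open St16

attribute [local instance] Matrix.linftyOpNormedRing Matrix.linftyOpNormedAlgebra

set_option maxHeartbeats 1000000 in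
/-- on an open set `U` where `P_s` has `k` pairwise distinct roots, if `Φ` is a
holomorphic solution of (@) on `U` then `Ψ(s) := P'_s(A(s)) Φ(s)` is a solution of (@@) on `U`. -/
theorem PprimeA_maps_solutions_to_singular_solutions
    (k : ℕ) (hk : 2 ≤ k) (U : Set (Fin k → ℂ)) (hU : IsOpen U)
    (hdist : ∀ s ∈ U, ∃ z : Fin k → ℂ, Function.Injective z ∧ ∀ j : Fin k, LP k s (z j) = 0)
    (Φ : (Fin k → ℂ) → Fin k → ℂ) (hΦdiff : DifferentiableOn ℂ Φ U)
    (hΦsol : ∀ s ∈ U, SatA k Φ s) :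
    ∀ s ∈ U, SatAA k (fun t => LPprimeA k t *ᵥ Φ t) s := by
  intro s hs h h1 h2
  have hk1 : 1 ≤ k := by omega
  obtain ⟨z, hzinj, hzroots⟩ := hdist s hs
  have hΦ : HasFDerivAt Φ (fderiv ℂ Φ s) s :=
    (hΦdiff.differentiableAt (hU.mem_nhds hs)).hasFDerivAt
  set F' := fderiv ℂ Φ s with hF'
  set vh : Fin k → ℂ := Pi.single (⟨h - 1, by omega⟩ : Fin k) (1 : ℂ) with hvh
  set vk : Fin k → ℂ := Pi.single (⟨k - 1, by omega⟩ : Fin k) (1 : ℂ) with hvk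
  have hPsi : HasFDerivAt (fun t => LPprimeA k t *ᵥ Φ t)
      (((mulVecCLM k).flip (Φ s)).comp (DPprime k s)
        + ((mulVecCLM k (LPprimeA k s)).comp F')) s :=
    hasFDerivAt_mulVec (hasFDerivAt_LPprimeA s) hΦ
  have hBPsi : HasFDerivAt (fun t => LcompA k t ^ (k - h) *ᵥ (LPprimeA k t *ᵥ Φ t))
      (((mulVecCLM k).flip (LPprimeA k s *ᵥ Φ s)).comp (Dpow k (k - h) s)
        + ((mulVecCLM k (LcompA k s ^ (k - h))).comp
            (((mulVecCLM k).flip (Φ s)).comp (DPprime k s)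
              + ((mulVecCLM k (LPprimeA k s)).comp F')))) s :=
    hasFDerivAt_mulVec (hasFDerivAt_pow (k - h) s) hPsi
  have hBPhi : HasFDerivAt (fun t => LcompA k t ^ (k - h) *ᵥ Φ t)
      (((mulVecCLM k).flip (Φ s)).comp (Dpow k (k - h) s)
        + ((mulVecCLM k (LcompA k s ^ (k - h))).comp F')) s :=
    hasFDerivAt_mulVec (hasFDerivAt_pow (k - h) s) hΦ
  have hsol := hΦsol s hs h h1 h2
  rw [hBPhi.fderiv] at hsol
  simp only [ContinuousLinearMap.add_apply, ContinuousLinearMap.comp_apply,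
    ContinuousLinearMap.flip_apply, mulVecCLM_apply] at hsol
  show ((-1 : ℂ) ^ (k + h)) • fderiv ℂ (fun t => LPprimeA k t *ᵥ Φ t) s vh
      = fderiv ℂ (fun t => LcompA k t ^ (k - h) *ᵥ (LPprimeA k t *ᵥ Φ t)) s vk
        + ((-1 : ℂ) ^ k * ((k - h : ℕ) : ℂ)) •
            (LcompA k s ^ (k - h - 1) *ᵥ ((LPprimeA k s)⁻¹ *ᵥ (LPprimeA k s *ᵥ Φ s)))
  rw [hPsi.fderiv, hBPsi.fderiv, inv_mulVec_cancel hk1 s z hzinj hzroots (Φ s)]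
  simp only [ContinuousLinearMap.add_apply, ContinuousLinearMap.comp_apply,
    ContinuousLinearMap.flip_apply, mulVecCLM_apply, mulVecCLM_flip_comp_apply]
  have hsol' : ((-1 : ℂ) ^ (k + h)) • F' vh
      = Dpow k (k - h) s vk *ᵥ Φ s + LcompA k s ^ (k - h) *ᵥ F' vk := hsol
  have hstep : ((-1 : ℂ) ^ (k + h)) • (LPprimeA k s *ᵥ F' vh)
      = LPprimeA k s *ᵥ (Dpow k (k - h) s vk *ᵥ Φ s)
        + LcompA k s ^ (k - h) *ᵥ (LPprimeA k s *ᵥ F' vk) := by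
    rw [← Matrix.mulVec_smul, hsol', Matrix.mulVec_add, Matrix.mulVec_mulVec (F' vk),
      Pprime_comm_pow s (k - h), ← Matrix.mulVec_mulVec]
  rw [smul_add, hstep, Matrix.mulVec_add]
  have hmtx0 : ((-1 : ℂ) ^ (k + h)) • DPprime k s vh
        + LPprimeA k s * Dpow k (k - h) s vk
      = Dpow k (k - h) s vk * LPprimeA k s
        + LcompA k s ^ (k - h) * DPprime k s vk
        + ((-1 : ℂ) ^ k * ((k - h : ℕ) : ℂ)) • LcompA k s ^ (k - h - 1) :=
    main_matrix hk s h h1 h2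
  have hmtx := congrArg (· *ᵥ Φ s) hmtx0
  simp only [Matrix.add_mulVec, Matrix.smul_mulVec, ← Matrix.mulVec_mulVec] at hmtx
  have hfin := congrArg
    (fun X => X + LcompA k s ^ (k - h) *ᵥ (LPprimeA k s *ᵥ F' vk)) hmtx
  abel_nf at hfin ⊢
  exact hfin






end FinalProof
end
end
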